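/- Let a ∈ ℂ, let M = {(z,0) ∈ ℂ² : |z| < 1}, and let L = {(z, −z·conj(a)) : z ∈ ℂ, (1+|a|²)·|z|² < 1} be the complex line through the origin with polar vector (a,1,0) in the ball B = {(z₁,z₂) : |z₁|²+|z₂|² < 1}. Let Π_M(z₁,z₂) := (z₁,0) be the orthogonal projection onto M. Then Π_M(L) = {(z,0) : |z| < c} where c := 1/√(1+|a|²); that is, the projection of L onto M is the open hyperbolic disc centered at the origin of radius log((1+c)/(1−c)), where c = |cos θ| and θ is the angle of intersection of L and M (since cos²θ = N(L,M) = 1/(1+|a|²)). -/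

import Mathlib

open Complex Real

lemma disc_aux (A r : ℝ) (hA : 0 ≤ A) (hr : 0 ≤ r) :
    (1 + A) * r ^ 2 < 1 ↔ r < 1 / Real.sqrt (1 + A) := by
  have h1 : (0:ℝ) < 1 + A := by linarith
  have hs : Real.sqrt (1 + A) > 0 := Real.sqrt_pos.mpr h1
  rw [lt_div_iff₀ hs]
  constructor
  · intro h
    nlinarith [Real.sq_sqrt h1.le, Real.sqrt_nonneg (1 + A), mul_nonneg hr hs.le]
  · intro h
    nlinarith [Real.sq_sqrt h1.le, Real.sqrt_nonneg (1 + A), mul_nonneg hr hs.le]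

/-- The orthogonal projection onto `M = {(z,0) : |z| < 1}` of the complex line `L`
through the origin with polar vector `(a,1,0)` is the open disc
`{(z,0) : |z| < 1/√(1+|a|²)}`. -/
theorem projection_of_intersecting_line_is_disc (a : ℂ)
    (L : Set (ℂ × ℂ))
    (hL : L = {p : ℂ × ℂ | ∃ z : ℂ,
      (1 + ‖a‖ ^ 2) * ‖z‖ ^ 2 < 1 ∧
      p = (z, -z * (starRingEnd ℂ) a)}) :
    (fun p : ℂ × ℂ => (p.1, (0 : ℂ))) '' L
      = {p : ℂ × ℂ | ∃ z : ℂ, p = (z, 0) ∧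
          ‖z‖ < 1 / Real.sqrt (1 + ‖a‖ ^ 2)} := by
  subst hL
  ext p
  simp only [Set.mem_image, Set.mem_setOf_eq]
  constructor
  · rintro ⟨q, ⟨z, hz, rfl⟩, rfl⟩
    exact ⟨z, rfl, (disc_aux _ _ (by positivity) (norm_nonneg z)).mp hz⟩
  · rintro ⟨z, rfl, hz⟩
    exact ⟨(z, -z * (starRingEnd ℂ) a),
      ⟨z, (disc_aux _ _ (by positivity) (norm_nonneg z)).mpr hz, rfl⟩, rfl⟩
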